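/- Let Duel(D)|_Y := E_x[ℓ(D(x), Y(x))] − α·E_{x₁}E_{x₂}[ℓ(D(x₁), Y(x₂))] with x, x₁, x₂ i.i.d. from p_duel, where Y(x) ∈ {0,1}. If Ỹ is a noisy version of Y* with flip rates e_data = P(Ỹ=0|Y*=1), e_g = P(Ỹ=1|Y*=0), then Duel(D)|_Ỹ = (1 − e_data − e_g)·Duel(D)|_{Y*} + (1−α)·E_{x∼p_duel}[e_data·ℓ(D(x),0) + e_g·ℓ(D(x),1)]. -/

import Mathlib

open MeasureTheory Real

/-- The duel term `Duel(D)|_Y = E_x[ℓ(D(x),Y(x))] - α·E_{x₁}E_{x₂}[ℓ(D(x₁),Y(x₂))]`,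
where `x, x₁, x₂` are i.i.d. from `μ = p_duel`, `ℓ(d,1) = log d`, `ℓ(d,0) = log(1-d)`,
and `t x` is the (conditional) probability that the label of `x` equals `1`. -/
noncomputable def duelVal {X : Type*} [MeasurableSpace X] (μ : Measure X)
    (D : X → ℝ) (α : ℝ) (t : X → ℝ) : ℝ :=
  (∫ x, (t x * Real.log (D x) + (1 - t x) * Real.log (1 - D x)) ∂μ) -
  α * ∫ x₁, ∫ x₂,
    (t x₂ * Real.log (D x₁) + (1 - t x₂) * Real.log (1 - D x₁)) ∂μ ∂μ

lemma inner_int {X : Type*} [MeasurableSpace X] (μ : Measure X) [IsProbabilityMeasure μ]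
    (t : X → ℝ) (ht : Integrable t μ) (a b : ℝ) :
    ∫ x, (t x * a + (1 - t x) * b) ∂μ = (∫ x, t x ∂μ) * a + (1 - ∫ x, t x ∂μ) * b := by
  have h1 : Integrable (fun x => t x * a) μ := ht.mul_const a
  have h0 : Integrable (fun x => (1:ℝ) - t x) μ := (integrable_const (1:ℝ)).sub ht
  have h2 : Integrable (fun x => (1 - t x) * b) μ := h0.mul_const b
  rw [integral_add h1 h2, integral_mul_const, integral_mul_const,
    integral_sub (integrable_const (1:ℝ)) ht, integral_const]
  simp

lemma comb_int {X : Type*} [MeasurableSpace X] (μ : Measure X)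
    {f g : X → ℝ} (hf : Integrable f μ) (hg : Integrable g μ) (a b : ℝ) :
    ∫ x, (a * f x + b * g x) ∂μ = a * ∫ x, f x ∂μ + b * ∫ x, g x ∂μ := by
  have h1 : Integrable (fun x => a * f x) μ := hf.const_mul a
  have h2 : Integrable (fun x => b * g x) μ := hg.const_mul b
  rw [integral_add h1 h2, integral_const_mul, integral_const_mul]

/-- Key decomposition in the proof of DuelGAN's Theorem 2: if `Ỹ` is a noisy version of
`Y*` with flip rates `e_data = P(Ỹ=0|Y*=1)` and `e_g = P(Ỹ=1|Y*=0)`, then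
`Duel(D)|_Ỹ = (1-e_data-e_g)·Duel(D)|_{Y*}
  + (1-α)·E_{x∼p_duel}[e_data·ℓ(D(x),0) + e_g·ℓ(D(x),1)]`. -/
theorem duel_noisy_decomposition
    {X : Type*} [MeasurableSpace X] (μ : Measure X) [IsProbabilityMeasure μ]
    (D : X → ℝ) (α : ℝ) (hα : α ∈ Set.Icc (0:ℝ) 1)
    (tstar : X → ℝ) (htm : Measurable tstar)
    (ht01 : ∀ x, tstar x = 0 ∨ tstar x = 1)
    (edata eg : ℝ)
    (hInt1 : Integrable (fun x => Real.log (D x)) μ)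
    (hInt2 : Integrable (fun x => Real.log (1 - D x)) μ) :
    duelVal μ D α (fun x => (1 - edata) * tstar x + eg * (1 - tstar x))
      = (1 - edata - eg) * duelVal μ D α tstar +
        (1 - α) * ∫ x, (edata * Real.log (1 - D x) + eg * Real.log (D x)) ∂μ := by
  have hbd : ∀ x, ‖tstar x‖ ≤ 1 := by
    intro x; rcases ht01 x with h | h <;> simp [h]
  have htint : Integrable tstar μ :=
    (integrable_const (1:ℝ)).mono' htm.aestronglyMeasurable (Filter.Eventually.of_forall hbd)
  have ht1 : Integrable (fun x => (1:ℝ) - tstar x) μ := (integrable_const (1:ℝ)).sub htint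
  have htint' : Integrable (fun x => (1 - edata) * tstar x + eg * (1 - tstar x)) μ :=
    (htint.const_mul _).add (ht1.const_mul _)
  have h1 : Integrable (fun x => tstar x * Real.log (D x)) μ :=
    hInt1.bdd_mul htm.aestronglyMeasurable (Filter.Eventually.of_forall hbd)
  have h2 : Integrable (fun x => (1 - tstar x) * Real.log (1 - D x)) μ := by
    refine hInt2.bdd_mul (c := 2) (aestronglyMeasurable_const.sub htm.aestronglyMeasurable) (Filter.Eventually.of_forall ?_)
    intro x; rcases ht01 x with h | h <;> simp [h] <;> norm_num
  have hf : Integrable (fun x => tstar x * Real.log (D x)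
      + (1 - tstar x) * Real.log (1 - D x)) μ := h1.add h2
  have hg : Integrable (fun x => edata * Real.log (1 - D x) + eg * Real.log (D x)) μ :=
    (hInt2.const_mul _).add (hInt1.const_mul _)
  set A := ∫ x, Real.log (D x) ∂μ with hA
  set B := ∫ x, Real.log (1 - D x) ∂μ with hB
  set T := ∫ x, tstar x ∂μ with hT
  set F := ∫ x, (tstar x * Real.log (D x) + (1 - tstar x) * Real.log (1 - D x)) ∂μ with hF
  have hTnoisy : ∫ x, ((1 - edata) * tstar x + eg * (1 - tstar x)) ∂μ
      = (1 - edata) * T + eg * (1 - T) := by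
    rw [comb_int μ htint ht1, integral_sub (integrable_const (1:ℝ)) htint, integral_const]
    simp [hT]
  have hfirst : ∫ x, (((1 - edata) * tstar x + eg * (1 - tstar x)) * Real.log (D x)
      + (1 - ((1 - edata) * tstar x + eg * (1 - tstar x))) * Real.log (1 - D x)) ∂μ
      = (1 - edata - eg) * F + (edata * B + eg * A) := by
    have hcongr : ∀ x, ((1 - edata) * tstar x + eg * (1 - tstar x)) * Real.log (D x)
        + (1 - ((1 - edata) * tstar x + eg * (1 - tstar x))) * Real.log (1 - D x)
        = (1 - edata - eg) * (tstar x * Real.log (D x) + (1 - tstar x) * Real.log (1 - D x))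
          + 1 * (edata * Real.log (1 - D x) + eg * Real.log (D x)) := by
      intro x; ring
    simp_rw [hcongr]
    rw [comb_int μ hf hg, comb_int μ hInt2 hInt1, ← hA, ← hB, ← hF]
    ring
  have hlast : ∫ x, (edata * Real.log (1 - D x) + eg * Real.log (D x)) ∂μ
      = edata * B + eg * A := by
    rw [comb_int μ hInt2 hInt1]
  simp only [duelVal]
  rw [hfirst, hlast]
  rw [show (∫ x₁, ∫ x₂, (((1 - edata) * tstar x₂ + eg * (1 - tstar x₂)) * Real.log (D x₁)
      + (1 - ((1 - edata) * tstar x₂ + eg * (1 - tstar x₂))) * Real.log (1 - D x₁)) ∂μ ∂μ)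
      = ((1 - edata) * T + eg * (1 - T)) * A
        + (1 - ((1 - edata) * T + eg * (1 - T))) * B from ?_,
    show (∫ x₁, ∫ x₂, (tstar x₂ * Real.log (D x₁)
      + (1 - tstar x₂) * Real.log (1 - D x₁)) ∂μ ∂μ) = T * A + (1 - T) * B from ?_]
  · ring
  · simp_rw [inner_int μ tstar htint, ← hT]
    have hTle : Integrable (fun x₁ => T * Real.log (D x₁) + (1 - T) * Real.log (1 - D x₁)) μ :=
      (hInt1.const_mul _).add (hInt2.const_mul _)
    rw [comb_int μ hInt1 hInt2]
  · simp_rw [inner_int μ _ htint', hTnoisy]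
    rw [comb_int μ hInt1 hInt2]
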